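/- (One-round Thompson-sampling lemma for bandits.) Let (Ω,𝔉,P) be a probability space, X : Ω → [0,1]^k and A* : Ω → [k] measurable, and let p ∈ Δ^{k−1} be given by p_a = P(A* = a). Let F(q) = −2 ∑_{a=1}^k sqrt(q_a) on [0,∞)^k, whose Bregman divergence is D_F(q,p) = ∑_{c : q_c ≠ p_c} (sqrt(q_c) − sqrt(p_c))² / sqrt(p_c) (interpreted as +∞ when p_c = 0 < q_c). For each a with p_a > 0 let Q^a be the Δ^{k−1}-valued random vector with coordinates Q^a_c = P(A* = c | σ(X_a)). Then ∑_{a : p_a > 0} p_a (E[X_a] − E[X_a | A* = a]) ≤ sqrt( k^{1/2} · ∑_{a : p_a > 0} p_a E[D_F(Q^a, p)] ), where E[X_a | A* = a] = E[X_a 1_{A* = a}] / p_a. (This is the round-t claim of the lemma with 𝔉_t trivial: when A_t is drawn from the posterior p independently of X, the conditional one-step regret is bounded by the square root of k^{1/2} times the expected Bregman information gain about A*.) -/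

import Mathlib

open MeasureTheory
open scoped BigOperators

noncomputable section

/-- The Bregman divergence of the potential `F(q) = −2 ∑ₐ √qₐ`:
`D_F(q, p) = ∑_{c : q_c ≠ p_c} (√q_c − √p_c)² / √p_c` (with the division-by-zero
convention for the coordinates with `p_c = 0 < q_c`, which below only ever occur on a
null set). -/
def sqrtBregman {k : ℕ} (q p : Fin k → ℝ) : ℝ :=
  ∑ c : Fin k,
    if q c = p c then 0 else (Real.sqrt (q c) - Real.sqrt (p c)) ^ 2 / Real.sqrt (p c)

lemma sqrtBregman_eq {k : ℕ} (q p : Fin k → ℝ) :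
    sqrtBregman q p = ∑ c : Fin k, (Real.sqrt (q c) - Real.sqrt (p c)) ^ 2 / Real.sqrt (p c) := by
  unfold sqrtBregman
  refine Finset.sum_congr rfl fun c _ => ?_
  split_ifs with h
  · rw [h]; simp
  · rfl


private lemma amgm_aux {x q pa u : ℝ} (hx0 : 0 ≤ x) (hx1 : x ≤ 1) (hq0 : 0 ≤ q)
    (hp : 0 < pa) (hu : 0 < u) :
    (x - 1/2) * (pa - q) ≤
      u * Real.sqrt pa / 4 * (Real.sqrt pa - Real.sqrt q) ^ 2 +
        1 / (4 * u * Real.sqrt pa) * (Real.sqrt pa + Real.sqrt q) ^ 2 := by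
  have ha : 0 < Real.sqrt pa := Real.sqrt_pos.2 hp
  have hb : 0 ≤ Real.sqrt q := Real.sqrt_nonneg q
  have ha2 : Real.sqrt pa ^ 2 = pa := Real.sq_sqrt hp.le
  have hb2 : Real.sqrt q ^ 2 = q := Real.sq_sqrt hq0
  set a := Real.sqrt pa
  set b := Real.sqrt q
  have h4 : (0:ℝ) < 4 * u * a := by positivity
  rw [← mul_le_mul_iff_right₀ h4]
  have h1 := mul_nonneg hx0 (sq_nonneg (u*a*(a-b) - (a+b)))
  have h2 := mul_nonneg (sub_nonneg.2 hx1) (sq_nonneg (u*a*(a-b) + (a+b)))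
  have key : 4*u*a*((x - 1/2)*(pa - q)) ≤ u^2*a^2*(a-b)^2 + (a+b)^2 := by
    rw [← ha2, ← hb2]
    nlinarith [h1, h2]
  calc 4*u*a*((x - 1/2)*(pa - q)) ≤ u^2*a^2*(a-b)^2 + (a+b)^2 := key
    _ = 4*u*a*(u * a / 4 * (a - b) ^ 2 + 1 / (4 * u * a) * (a + b) ^ 2) := by
        field_simp


private lemma opt_aux {K S : ℝ} (hK : 0 < K) (hS : 0 < S) :
    (2 * Real.sqrt K / Real.sqrt S) / 4 * S
        + K / (2 * Real.sqrt K / Real.sqrt S) = Real.sqrt (K * S) := by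
  have hcK : 0 < Real.sqrt K := Real.sqrt_pos.2 hK
  have hcS : 0 < Real.sqrt S := Real.sqrt_pos.2 hS
  have h1 : Real.sqrt K * Real.sqrt K = K := Real.mul_self_sqrt hK.le
  have h2 : Real.sqrt S * Real.sqrt S = S := Real.mul_self_sqrt hS.le
  rw [Real.sqrt_mul hK.le]
  field_simp
  ring_nf
  nlinarith [h1, h2, hcK, hcS]


/-- **One-round Thompson-sampling lemma for `k`-armed bandits.**  Let `p` be the prior
distribution of the optimal action `A*` and, for each action `a`, let `Qᵃ` be the
posterior distribution of `A*` given the observed loss `X_a`.  When the action is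
sampled from `p` independently of `X`, the expected one-step regret
`∑_a p_a (E[X_a] − E[X_a | A* = a])` is at most
`√(k^{1/2} ∑_a p_a E[D_F(Qᵃ, p)])` for the potential `F(q) = −2 ∑ₐ √qₐ`. -/
theorem thompson_one_round_bandit {Ω : Type*} {mΩ : MeasurableSpace Ω}
    {P : Measure Ω} [IsProbabilityMeasure P] {k : ℕ} (hk : 1 ≤ k)
    (X : Ω → Fin k → ℝ) (hX : Measurable X)
    (hX01 : ∀ ω a, X ω a ∈ Set.Icc (0 : ℝ) 1)
    (Astar : Ω → Fin k) (hA : Measurable Astar)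
    (p : Fin k → ℝ) (hp : ∀ a, p a = (P {ω | Astar ω = a}).toReal)
    (Q : Fin k → Ω → Fin k → ℝ)
    (hQ : ∀ a c, (fun ω => Q a ω c) =
      P[fun ω' => if Astar ω' = c then (1 : ℝ) else 0 |
        MeasurableSpace.comap (fun ω' => X ω' a) inferInstance]) :
    ∑ a ∈ Finset.univ.filter (fun a => 0 < p a),
        p a * ((∫ ω, X ω a ∂P) - (∫ ω in {ω' | Astar ω' = a}, X ω a ∂P) / p a) ≤
      Real.sqrt (Real.sqrt k *
        ∑ a ∈ Finset.univ.filter (fun a => 0 < p a),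
          p a * ∫ ω, sqrtBregman (Q a ω) p ∂P) := by
  classical
  set T := Finset.univ.filter (fun a => 0 < p a) with hT
  set ind : Fin k → Ω → ℝ := fun c ω => if Astar ω = c then 1 else 0 with hind
  -- basic facts
  have hmle : ∀ a : Fin k, MeasurableSpace.comap (fun ω => X ω a) inferInstance ≤ mΩ :=
    fun a => ((measurable_pi_apply a).comp hX).comap_le
  have hXa_meas : ∀ a, Measurable (fun ω => X ω a) := fun a => (measurable_pi_apply a).comp hX
  have hsetA : ∀ c : Fin k, MeasurableSet {ω | Astar ω = c} := fun c =>
    hA (measurableSet_singleton c)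
  have hind_meas : ∀ c, Measurable (ind c) := fun c =>
    Measurable.ite (hsetA c) measurable_const measurable_const
  have hind_int : ∀ c, Integrable (ind c) P := by
    intro c
    refine Integrable.mono' (integrable_const 1) (hind_meas c).aestronglyMeasurable ?_
    refine Filter.Eventually.of_forall fun ω => ?_
    simp only [hind]
    split_ifs <;> simp
  have hQsm : ∀ a c, StronglyMeasurable (fun ω => Q a ω c) := fun a c => by
    rw [hQ a c]; exact stronglyMeasurable_condExp.mono (hmle a)
  have hQint : ∀ a c, Integrable (fun ω => Q a ω c) P := fun a c => by
    rw [hQ a c]; exact integrable_condExp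
  have hQ01 : ∀ a c, ∀ᵐ ω ∂P, Q a ω c ∈ Set.Icc (0:ℝ) 1 := by
    intro a c
    have h0 : (0:Ω → ℝ) ≤ᵐ[P]
        P[ind c | MeasurableSpace.comap (fun ω' => X ω' a) inferInstance] :=
      condExp_nonneg (Filter.Eventually.of_forall fun ω => by
        simp only [hind, Pi.zero_apply]; split_ifs <;> norm_num)
    have h1 : P[ind c | MeasurableSpace.comap (fun ω' => X ω' a) inferInstance]
        ≤ᵐ[P] fun _ => (1:ℝ) := by
      have hmono := condExp_mono (m := MeasurableSpace.comap (fun ω' => X ω' a) inferInstance)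
        (hind_int c) (integrable_const (1:ℝ))
        (Filter.Eventually.of_forall fun ω => by
          simp only [hind]; split_ifs <;> norm_num)
      rwa [condExp_const (hmle a)] at hmono
    have hQac : ∀ ω, Q a ω c
        = (P[ind c | MeasurableSpace.comap (fun ω' => X ω' a) inferInstance]) ω :=
      fun ω => congrFun (hQ a c) ω
    filter_upwards [h0, h1] with ω hω0 hω1
    rw [Set.mem_Icc, hQac ω]
    exact ⟨hω0, hω1⟩
  have hEQ : ∀ a c, ∫ ω, Q a ω c ∂P = p c := by
    intro a c
    rw [hQ a c, integral_condExp (hmle a)]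
    have : (fun ω' => if Astar ω' = c then (1:ℝ) else 0)
        = Set.indicator {ω' | Astar ω' = c} (fun _ => (1:ℝ)) := by
      funext ω; rw [Set.indicator_apply]; rfl
    rw [this, integral_indicator_const (1:ℝ) (hsetA c), hp c, smul_eq_mul, mul_one]
    rfl
  have hXa_int : ∀ a, Integrable (fun ω => X ω a) P := by
    intro a
    refine Integrable.mono' (integrable_const 1) (hXa_meas a).aestronglyMeasurable ?_
    exact Filter.Eventually.of_forall fun ω =>
      abs_le.2 ⟨by linarith [(hX01 ω a).1], (hX01 ω a).2⟩
  have hXQ_int : ∀ a, Integrable (fun ω => X ω a * Q a ω a) P := by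
    intro a
    refine Integrable.mono' (integrable_const 1)
      ((hXa_meas a).aestronglyMeasurable.mul (hQsm a a).aestronglyMeasurable) ?_
    filter_upwards [hQ01 a a] with ω hω
    rw [norm_mul]
    have h1 : ‖X ω a‖ ≤ 1 := abs_le.2 ⟨by linarith [(hX01 ω a).1], (hX01 ω a).2⟩
    have h2 : ‖Q a ω a‖ ≤ 1 := abs_le.2 ⟨by linarith [hω.1], hω.2⟩
    calc ‖X ω a‖ * ‖Q a ω a‖ ≤ 1 * 1 :=
        mul_le_mul h1 h2 (norm_nonneg _) zero_le_one
      _ = 1 := mul_one 1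
  have hXQ : ∀ a, ∫ ω, X ω a * Q a ω a ∂P = ∫ ω in {ω' | Astar ω' = a}, X ω a ∂P := by
    intro a
    have hsm : StronglyMeasurable[MeasurableSpace.comap (fun ω' => X ω' a) inferInstance]
        (fun ω => X ω a) :=
      (Measurable.stronglyMeasurable (measurable_iff_comap_le.mpr le_rfl))
    have hpull := condExp_stronglyMeasurable_mul_of_bound (hmle a) hsm (hind_int a) 1
      (Filter.Eventually.of_forall fun ω =>
        abs_le.2 ⟨by linarith [(hX01 ω a).1], (hX01 ω a).2⟩)
    have e1 : ∫ ω, X ω a * Q a ω a ∂P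
        = ∫ ω, ((fun ω => X ω a) * P[ind a | MeasurableSpace.comap
            (fun ω' => X ω' a) inferInstance]) ω ∂P := by
      refine integral_congr_ae (Filter.Eventually.of_forall fun ω => ?_)
      simp only [Pi.mul_apply]
      rw [congrFun (hQ a a) ω]
    have e2 : ∫ ω, ((fun ω => X ω a) * ind a) ω ∂P = ∫ ω in {ω' | Astar ω' = a}, X ω a ∂P := by
      have : (fun ω => X ω a) * ind a
          = Set.indicator {ω' | Astar ω' = a} (fun ω => X ω a) := by
        funext ω
        rw [Set.indicator_apply, Pi.mul_apply]
        by_cases h : Astar ω = a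
        · simp only [hind, if_pos h, mul_one]
          rw [if_pos (by exact h)]
        · simp only [hind, if_neg h, mul_zero]
          rw [if_neg (by exact h)]
      rw [this, integral_indicator (hsetA a)]
    rw [e1, integral_congr_ae hpull.symm, integral_condExp (hmle a), e2]
  -- the regret identity
  have hkey1 : ∀ a ∈ T,
      p a * (∫ ω, X ω a ∂P) - ∫ ω in {ω' | Astar ω' = a}, X ω a ∂P
        = ∫ ω, (X ω a - 1/2) * (p a - Q a ω a) ∂P := by
    intro a _
    rw [← hXQ a]
    have hrw : (fun ω => (X ω a - 1/2) * (p a - Q a ω a))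
        = fun ω => (p a * X ω a - X ω a * Q a ω a) - (1/2 * p a - 1/2 * Q a ω a) := by
      funext ω; ring
    have h1 : Integrable (fun ω => p a * X ω a - X ω a * Q a ω a) P :=
      ((hXa_int a).const_mul (p a)).sub (hXQ_int a)
    have h2 : Integrable (fun ω => 1/2 * p a - 1/2 * Q a ω a) P :=
      (integrable_const (1/2 * p a)).sub ((hQint a a).const_mul (1/2))
    rw [hrw, integral_sub h1 h2,
      integral_sub ((hXa_int a).const_mul (p a)) (hXQ_int a),
      integral_sub (integrable_const (1/2 * p a)) ((hQint a a).const_mul (1/2)),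
      integral_const_mul]
    rw [integral_const_mul, integral_const_mul, hEQ a a, integral_const]
    simp [measure_univ]
  set E : Fin k → ℝ := fun a => ∫ ω, (Real.sqrt (p a) - Real.sqrt (Q a ω a))^2 ∂P with hE
  have hQs_meas : ∀ a, Measurable (fun ω => Real.sqrt (Q a ω a)) := fun a =>
    Real.continuous_sqrt.measurable.comp (hQsm a a).measurable
  have hg1_int : ∀ a, Integrable (fun ω => (Real.sqrt (p a) - Real.sqrt (Q a ω a))^2) P := by
    intro a
    refine Integrable.mono' (integrable_const ((Real.sqrt (p a) + 1)^2))
      ((measurable_const.sub (hQs_meas a)).pow_const 2).aestronglyMeasurable ?_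
    filter_upwards [hQ01 a a] with ω hω
    have h1 : 0 ≤ Real.sqrt (Q a ω a) := Real.sqrt_nonneg _
    have h2 : Real.sqrt (Q a ω a) ≤ 1 := Real.sqrt_le_one.mpr hω.2
    rw [Real.norm_eq_abs, abs_of_nonneg (sq_nonneg _)]
    nlinarith [Real.sqrt_nonneg (p a)]
  have hg2_int : ∀ a, Integrable (fun ω => (Real.sqrt (p a) + Real.sqrt (Q a ω a))^2) P := by
    intro a
    refine Integrable.mono' (integrable_const ((Real.sqrt (p a) + 1)^2))
      ((measurable_const.add (hQs_meas a)).pow_const 2).aestronglyMeasurable ?_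
    filter_upwards [hQ01 a a] with ω hω
    have h1 : 0 ≤ Real.sqrt (Q a ω a) := Real.sqrt_nonneg _
    have h2 : Real.sqrt (Q a ω a) ≤ 1 := Real.sqrt_le_one.mpr hω.2
    rw [Real.norm_eq_abs, abs_of_nonneg (sq_nonneg _)]
    nlinarith [Real.sqrt_nonneg (p a)]
  have hE_nonneg : ∀ a, 0 ≤ E a := fun a =>
    integral_nonneg fun ω => sq_nonneg _
  have hkey2 : ∀ u : ℝ, 0 < u → ∀ a ∈ T,
      ∫ ω, (X ω a - 1/2) * (p a - Q a ω a) ∂P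
        ≤ u/4 * (Real.sqrt (p a) * E a) + Real.sqrt (p a)/u := by
    intro u hu a haT
    have hpa : 0 < p a := (Finset.mem_filter.mp haT).2
    have hsa : 0 < Real.sqrt (p a) := Real.sqrt_pos.2 hpa
    have hL_int : Integrable (fun ω => (X ω a - 1/2) * (p a - Q a ω a)) P := by
      refine Integrable.mono' (integrable_const ((1/2) * (p a + 1)))
        (((hXa_meas a).sub measurable_const).mul
          (measurable_const.sub (hQsm a a).measurable)).aestronglyMeasurable ?_
      filter_upwards [hQ01 a a] with ω hω
      rw [Real.norm_eq_abs, abs_mul]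
      have h1 : |X ω a - 1/2| ≤ 1/2 :=
        abs_le.2 ⟨by linarith [(hX01 ω a).1], by linarith [(hX01 ω a).2]⟩
      have h2 : |p a - Q a ω a| ≤ p a + 1 :=
        abs_le.2 ⟨by linarith [hω.2], by linarith [hω.1]⟩
      exact mul_le_mul h1 h2 (abs_nonneg _) (by norm_num)
    have hR_int : Integrable (fun ω =>
        u * Real.sqrt (p a) / 4 * (Real.sqrt (p a) - Real.sqrt (Q a ω a))^2
          + 1/(4*u*Real.sqrt (p a)) * (Real.sqrt (p a) + Real.sqrt (Q a ω a))^2) P :=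
      ((hg1_int a).const_mul _).add ((hg2_int a).const_mul _)
    have hptwise : ∀ᵐ ω ∂P, (X ω a - 1/2) * (p a - Q a ω a)
        ≤ u * Real.sqrt (p a) / 4 * (Real.sqrt (p a) - Real.sqrt (Q a ω a))^2
          + 1/(4*u*Real.sqrt (p a)) * (Real.sqrt (p a) + Real.sqrt (Q a ω a))^2 := by
      filter_upwards [hQ01 a a] with ω hω
      exact amgm_aux (hX01 ω a).1 (hX01 ω a).2 hω.1 hpa hu
    have hI2 : ∫ ω, (Real.sqrt (p a) + Real.sqrt (Q a ω a))^2 ∂P ≤ 4 * p a := by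
      have heq : ∫ ω, (2*(p a) + 2*(Q a ω a)) ∂P = 4 * p a := by
        rw [integral_add (integrable_const _) ((hQint a a).const_mul 2),
          integral_const, integral_const_mul, hEQ a a]
        simp [measure_univ]
        ring
      have hint2 : Integrable (fun ω => 2*(p a) + 2*(Q a ω a)) P :=
        (integrable_const _).add ((hQint a a).const_mul 2)
      refine le_trans (integral_mono_ae (hg2_int a) hint2 ?_) heq.le
      filter_upwards [hQ01 a a] with ω hω
      nlinarith [Real.sq_sqrt hω.1, Real.sq_sqrt hpa.le,
        sq_nonneg (Real.sqrt (p a) - Real.sqrt (Q a ω a))]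
    have hc : (0:ℝ) ≤ 1/(4*u*Real.sqrt (p a)) := by positivity
    calc ∫ ω, (X ω a - 1/2) * (p a - Q a ω a) ∂P
        ≤ ∫ ω, (u * Real.sqrt (p a) / 4 * (Real.sqrt (p a) - Real.sqrt (Q a ω a))^2
            + 1/(4*u*Real.sqrt (p a)) * (Real.sqrt (p a) + Real.sqrt (Q a ω a))^2) ∂P :=
          integral_mono_ae hL_int hR_int hptwise
      _ = u * Real.sqrt (p a) / 4 * E a
          + 1/(4*u*Real.sqrt (p a)) * ∫ ω, (Real.sqrt (p a) + Real.sqrt (Q a ω a))^2 ∂P := by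
          rw [integral_add ((hg1_int a).const_mul _) ((hg2_int a).const_mul _),
            integral_const_mul, integral_const_mul]
      _ ≤ u * Real.sqrt (p a) / 4 * E a + 1/(4*u*Real.sqrt (p a)) * (4 * p a) := by
          exact add_le_add_right (mul_le_mul_of_nonneg_left hI2 hc) _
      _ = u/4 * (Real.sqrt (p a) * E a) + Real.sqrt (p a)/u := by
          have h5 : (1:ℝ)/(4*u*Real.sqrt (p a)) * (4 * p a)
              = (p a / Real.sqrt (p a))/u := by
            field_simp
          rw [h5, Real.div_sqrt]
          ring
  -- integrability of the Bregman divergence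
  have hBreg_int : ∀ a, Integrable (fun ω => sqrtBregman (Q a ω) p) P := by
    intro a
    have hfe : (fun ω => sqrtBregman (Q a ω) p)
        = fun ω => ∑ c : Fin k,
            (Real.sqrt (Q a ω c) - Real.sqrt (p c))^2 / Real.sqrt (p c) := by
      funext ω; rw [sqrtBregman_eq]
    rw [hfe]
    refine integrable_finset_sum _ fun c _ => ?_
    have hm : Measurable fun ω =>
        (Real.sqrt (Q a ω c) - Real.sqrt (p c))^2 / Real.sqrt (p c) :=
      (((Real.continuous_sqrt.measurable.comp (hQsm a c).measurable).sub
        measurable_const).pow_const 2).div_const _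
    refine Integrable.mono'
      (integrable_const ((1 + Real.sqrt (p c))^2 / Real.sqrt (p c)))
      hm.aestronglyMeasurable ?_
    filter_upwards [hQ01 a c] with ω hω
    have h1 : 0 ≤ Real.sqrt (Q a ω c) := Real.sqrt_nonneg _
    have h2 : Real.sqrt (Q a ω c) ≤ 1 := Real.sqrt_le_one.mpr hω.2
    rw [Real.norm_eq_abs, abs_of_nonneg (by positivity)]
    rw [div_eq_mul_inv, div_eq_mul_inv]
    refine mul_le_mul_of_nonneg_right ?_ (by positivity)
    nlinarith [Real.sqrt_nonneg (p c)]
  -- the Bregman divergence dominates the coordinate-`a` term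
  have hBreg : ∀ a ∈ T, Real.sqrt (p a) * E a ≤ p a * ∫ ω, sqrtBregman (Q a ω) p ∂P := by
    intro a haT
    have hpa : 0 < p a := (Finset.mem_filter.mp haT).2
    have hsa : 0 < Real.sqrt (p a) := Real.sqrt_pos.2 hpa
    have hterm_int : Integrable
        (fun ω => (Real.sqrt (p a) - Real.sqrt (Q a ω a))^2 / Real.sqrt (p a)) P :=
      (hg1_int a).div_const _
    have hpt : ∀ ω, (Real.sqrt (p a) - Real.sqrt (Q a ω a))^2 / Real.sqrt (p a)
        ≤ sqrtBregman (Q a ω) p := by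
      intro ω
      rw [sqrtBregman_eq]
      have hsw : (Real.sqrt (p a) - Real.sqrt (Q a ω a))^2
          = (Real.sqrt (Q a ω a) - Real.sqrt (p a))^2 := by ring
      rw [hsw]
      exact Finset.single_le_sum
        (f := fun c => (Real.sqrt (Q a ω c) - Real.sqrt (p c))^2 / Real.sqrt (p c))
        (fun c _ => by positivity) (Finset.mem_univ a)
    have h6 : E a / Real.sqrt (p a) ≤ ∫ ω, sqrtBregman (Q a ω) p ∂P := by
      rw [hE]
      rw [← integral_div]
      exact integral_mono hterm_int (hBreg_int a) hpt
    calc Real.sqrt (p a) * E a = p a * (E a / Real.sqrt (p a)) := by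
          field_simp
          linear_combination (E a) * Real.mul_self_sqrt hpa.le
      _ ≤ p a * ∫ ω, sqrtBregman (Q a ω) p ∂P := mul_le_mul_of_nonneg_left h6 hpa.le
  -- sum bounds
  have hp_nonneg : ∀ a, 0 ≤ p a := fun a => (hp a) ▸ ENNReal.toReal_nonneg
  have hsum_p : ∑ a ∈ T, p a ≤ 1 := by
    have htot : ∑ a : Fin k, p a = 1 := by
      have h := sum_measure_preimage_singleton (Finset.univ : Finset (Fin k)) (μ := P)
        (f := Astar) (fun y _ => hA (measurableSet_singleton y))
      simp only [Finset.coe_univ, Set.preimage_univ, measure_univ] at h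
      simp_rw [hp]
      rw [← ENNReal.toReal_sum (fun a _ => measure_ne_top P _)]
      have : ∑ a : Fin k, P {ω | Astar ω = a} = 1 := h
      rw [this, ENNReal.toReal_one]
    calc ∑ a ∈ T, p a ≤ ∑ a : Fin k, p a :=
          Finset.sum_le_sum_of_subset_of_nonneg (Finset.subset_univ T)
            (fun a _ _ => hp_nonneg a)
      _ = 1 := htot
  have hsqp : ∑ a ∈ T, Real.sqrt (p a) ≤ Real.sqrt k := by
    have hcs := Finset.sum_mul_sq_le_sq_mul_sq T (fun _ => (1:ℝ)) (fun a => Real.sqrt (p a))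
    simp only [one_mul, one_pow] at hcs
    have hcard : (∑ _a ∈ T, (1:ℝ)) ≤ (k:ℝ) := by
      rw [Finset.sum_const, nsmul_eq_mul, mul_one]
      exact_mod_cast (Finset.card_le_univ T).trans_eq (by simp)
    have hsq : ∑ a ∈ T, Real.sqrt (p a)^2 ≤ 1 :=
      le_trans (le_of_eq (Finset.sum_congr rfl fun a _ => Real.sq_sqrt (hp_nonneg a))) hsum_p
    have h1 : (∑ a ∈ T, Real.sqrt (p a))^2 ≤ (k:ℝ) := by
      refine hcs.trans ?_
      calc (∑ _a ∈ T, (1:ℝ)) * ∑ a ∈ T, Real.sqrt (p a)^2 ≤ (k:ℝ) * 1 := by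
            refine mul_le_mul hcard hsq ?_ (Nat.cast_nonneg k)
            exact Finset.sum_nonneg fun a _ => sq_nonneg _
        _ = (k:ℝ) := mul_one _
    have h0 : 0 ≤ ∑ a ∈ T, Real.sqrt (p a) := Finset.sum_nonneg fun a _ => Real.sqrt_nonneg _
    exact (Real.le_sqrt h0 (Nat.cast_nonneg k)).mpr h1
  -- the central bound, for all u > 0
  set S := ∑ a ∈ T, Real.sqrt (p a) * E a with hS
  set L := ∑ a ∈ T, (p a * (∫ ω, X ω a ∂P) - ∫ ω in {ω' | Astar ω' = a}, X ω a ∂P) with hL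
  have hS0 : 0 ≤ S :=
    Finset.sum_nonneg fun a _ => mul_nonneg (Real.sqrt_nonneg _) (hE_nonneg a)
  have hmain : ∀ u : ℝ, 0 < u → L ≤ u/4 * S + Real.sqrt k / u := by
    intro u hu
    calc L ≤ ∑ a ∈ T, (u/4 * (Real.sqrt (p a) * E a) + Real.sqrt (p a)/u) := by
          refine Finset.sum_le_sum fun a ha => ?_
          rw [hkey1 a ha]
          exact hkey2 u hu a ha
      _ = u/4 * S + (∑ a ∈ T, Real.sqrt (p a))/u := by
          rw [hS, Finset.sum_add_distrib, ← Finset.mul_sum, ← Finset.sum_div]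
      _ ≤ u/4 * S + Real.sqrt k / u := by
          have h8 : (∑ a ∈ T, Real.sqrt (p a))/u ≤ Real.sqrt k / u := by gcongr
          linarith
  -- rewrite the goal
  have hgoalL : ∑ a ∈ T,
      p a * ((∫ ω, X ω a ∂P) - (∫ ω in {ω' | Astar ω' = a}, X ω a ∂P) / p a) = L := by
    rw [hL]
    refine Finset.sum_congr rfl fun a ha => ?_
    have hpa : p a ≠ 0 := ne_of_gt (Finset.mem_filter.mp ha).2
    field_simp
  have hSB : S ≤ ∑ a ∈ T, p a * ∫ ω, sqrtBregman (Q a ω) p ∂P := Finset.sum_le_sum hBreg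
  have hmono : Real.sqrt (Real.sqrt k * S)
      ≤ Real.sqrt (Real.sqrt k * ∑ a ∈ T, p a * ∫ ω, sqrtBregman (Q a ω) p ∂P) :=
    Real.sqrt_le_sqrt (mul_le_mul_of_nonneg_left hSB (Real.sqrt_nonneg _))
  rw [hgoalL]
  refine le_trans ?_ hmono
  have hk0 : (0:ℝ) < Real.sqrt k :=
    Real.sqrt_pos.2 (by exact_mod_cast Nat.pos_of_ne_zero (by omega))
  rcases hS0.eq_or_lt with hS0' | hSpos
  · -- degenerate case `S = 0`
    have hL0 : L ≤ 0 := by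
      by_contra hc
      push_neg at hc
      have hth := hmain (2 * Real.sqrt k / L) (div_pos (by linarith) hc)
      rw [← hS0', mul_zero, zero_add] at hth
      have h7 : Real.sqrt k / (2 * Real.sqrt k / L) = L / 2 := by
        field_simp
      rw [h7] at hth
      linarith
    exact hL0.trans (Real.sqrt_nonneg _)
  · have hs0 : 0 < Real.sqrt S := Real.sqrt_pos.2 hSpos
    have hcc : 0 < Real.sqrt (Real.sqrt k) := Real.sqrt_pos.2 hk0
    have hu : 0 < 2 * Real.sqrt (Real.sqrt k) / Real.sqrt S :=
      div_pos (by linarith) hs0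
    exact (hmain _ hu).trans_eq (opt_aux hk0 hSpos)


end
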